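/- Suppose Q, Q̂ ∈ ℝ^{n×n} are symmetric, U and Û consist of the r leading orthonormal eigenvectors (singular vectors) of Q and Q̂ respectively, and σ_r(Q) > σ_{r+1}(Q). Then ‖ÛÛᵀ − UUᵀ‖ ≤ (2/(σ_r(Q) − σ_{r+1}(Q)))·‖Q̂ − Q‖ (spectral norms). Moreover ‖ÛÛᵀ − UUᵀ‖ = ‖Û_⊥ᵀU‖, where Û_⊥ is the orthonormal complement of Û. -/

import Mathlib

open Matrix

/-- The spectral (ℓ²-operator) norm of a real matrix. -/
noncomputable def specNorm {m n : ℕ} (A : Matrix (Fin m) (Fin n) ℝ) : ℝ :=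
  ‖LinearMap.toContinuousLinearMap (Matrix.toEuclideanLin A)‖


local notation "⟪" x ", " y "⟫" => @inner ℝ _ _ x y

noncomputable def specCLM {m n : ℕ} (A : Matrix (Fin m) (Fin n) ℝ) :
    EuclideanSpace ℝ (Fin n) →L[ℝ] EuclideanSpace ℝ (Fin m) :=
  LinearMap.toContinuousLinearMap (Matrix.toEuclideanLin A)
lemma specNorm_eq {m n : ℕ} (A : Matrix (Fin m) (Fin n) ℝ) : specNorm A = ‖specCLM A‖ := rfl
lemma specCLM_apply {m n : ℕ} (A : Matrix (Fin m) (Fin n) ℝ) (x : EuclideanSpace ℝ (Fin n)) :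
    specCLM A x = (WithLp.equiv 2 (Fin m → ℝ)).symm (A *ᵥ (WithLp.equiv 2 (Fin n → ℝ)) x) := by
  simp [specCLM, Matrix.toEuclideanLin_apply]
lemma specCLM_mul {m n k : ℕ} (A : Matrix (Fin m) (Fin n) ℝ) (B : Matrix (Fin n) (Fin k) ℝ) :
    specCLM (A * B) = (specCLM A).comp (specCLM B) := by
  ext x i
  simp [specCLM_apply, Matrix.mulVec_mulVec]
lemma specCLM_transpose {m n : ℕ} (A : Matrix (Fin m) (Fin n) ℝ) :
    specCLM Aᵀ = ContinuousLinearMap.adjoint (specCLM A) := by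
  have h : Aᵀ = A.conjTranspose := by ext i j; simp [Matrix.conjTranspose]
  rw [specCLM, h, Matrix.toEuclideanLin_conjTranspose_eq_adjoint]
  exact LinearMap.adjoint_toContinuousLinearMap _
lemma specNorm_transpose {m n : ℕ} (A : Matrix (Fin m) (Fin n) ℝ) :
    specNorm Aᵀ = specNorm A := by
  rw [specNorm_eq, specNorm_eq, specCLM_transpose]
  exact ContinuousLinearMap.adjoint.norm_map _
lemma specCLM_one {n : ℕ} : specCLM (1 : Matrix (Fin n) (Fin n) ℝ) = ContinuousLinearMap.id ℝ _ := by
  ext x i; simp [specCLM_apply]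
lemma specNorm_nonneg {m n : ℕ} (A : Matrix (Fin m) (Fin n) ℝ) : 0 ≤ specNorm A :=
  norm_nonneg _
lemma norm_specCLM_le {m n : ℕ} (A : Matrix (Fin m) (Fin n) ℝ) (x : EuclideanSpace ℝ (Fin n)) :
    ‖specCLM A x‖ ≤ specNorm A * ‖x‖ := (specCLM A).le_opNorm x
lemma specNorm_mul_le {m n k : ℕ} (A : Matrix (Fin m) (Fin n) ℝ) (B : Matrix (Fin n) (Fin k) ℝ) :
    specNorm (A * B) ≤ specNorm A * specNorm B := by
  rw [specNorm_eq, specCLM_mul]; exact ContinuousLinearMap.opNorm_comp_le _ _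
lemma inner_specCLM_left {m n : ℕ} (A : Matrix (Fin m) (Fin n) ℝ)
    (x : EuclideanSpace ℝ (Fin n)) (y : EuclideanSpace ℝ (Fin m)) :
    ⟪specCLM A x, y⟫ = ⟪x, specCLM Aᵀ y⟫ := by
  rw [specCLM_transpose, ContinuousLinearMap.adjoint_inner_right]
lemma norm_specCLM_isometry {n r : ℕ} {U : Matrix (Fin n) (Fin r) ℝ} (hU : Uᵀ * U = 1)
    (x : EuclideanSpace ℝ (Fin r)) : ‖specCLM U x‖ = ‖x‖ := by
  have h : ⟪specCLM U x, specCLM U x⟫ = ⟪x, x⟫ := by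
    rw [inner_specCLM_left]
    have : specCLM Uᵀ (specCLM U x) = specCLM (Uᵀ * U) x := by rw [specCLM_mul]; rfl
    rw [this, hU, specCLM_one]; rfl
  have := congrArg Real.sqrt h
  rwa [real_inner_self_eq_norm_mul_norm, real_inner_self_eq_norm_mul_norm,
    Real.sqrt_mul_self (norm_nonneg _), Real.sqrt_mul_self (norm_nonneg _)] at this
lemma specNorm_isometry_le {n r : ℕ} {U : Matrix (Fin n) (Fin r) ℝ} (hU : Uᵀ * U = 1) :
    specNorm U ≤ 1 := by
  rw [specNorm_eq]
  refine ContinuousLinearMap.opNorm_le_bound _ zero_le_one fun x => ?_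
  rw [norm_specCLM_isometry hU, one_mul]
lemma specNorm_isometry_mul {n r m : ℕ} {U : Matrix (Fin n) (Fin r) ℝ} (hU : Uᵀ * U = 1)
    (M : Matrix (Fin r) (Fin m) ℝ) : specNorm (U * M) = specNorm M := by
  rw [specNorm_eq, specNorm_eq]
  refine le_antisymm ?_ ?_ <;>
    refine ContinuousLinearMap.opNorm_le_bound _ (norm_nonneg _) fun x => ?_
  · rw [specCLM_mul, ContinuousLinearMap.comp_apply, norm_specCLM_isometry hU]
    exact (specCLM M).le_opNorm x
  · have : ‖specCLM M x‖ = ‖specCLM (U * M) x‖ := by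
      rw [specCLM_mul, ContinuousLinearMap.comp_apply, norm_specCLM_isometry hU]
    rw [this]; exact (specCLM (U * M)).le_opNorm x
lemma specNorm_mul_isometry {n r m : ℕ} {U : Matrix (Fin n) (Fin r) ℝ} (hU : Uᵀ * U = 1)
    (M : Matrix (Fin m) (Fin r) ℝ) : specNorm (M * Uᵀ) = specNorm M := by
  rw [← specNorm_transpose, Matrix.transpose_mul, Matrix.transpose_transpose,
    specNorm_isometry_mul hU, specNorm_transpose]
lemma specNorm_transpose_mul_self {m n : ℕ} (A : Matrix (Fin m) (Fin n) ℝ) :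
    specNorm (Aᵀ * A) = specNorm A * specNorm A := by
  rw [specNorm_eq, specCLM_mul, specCLM_transpose, specNorm_eq]
  exact ContinuousLinearMap.norm_adjoint_comp_self _

lemma exists_norm_max {E F : Type*} [NormedAddCommGroup E] [NormedSpace ℝ E]
    [NormedAddCommGroup F] [NormedSpace ℝ F] [FiniteDimensional ℝ E] [Nontrivial E]
    (T : E →L[ℝ] F) : ∃ x : E, ‖x‖ = 1 ∧ ‖T x‖ = ‖T‖ := by
  obtain ⟨x₀, hx₀s, hmax⟩ := (isCompact_sphere (0 : E) 1).exists_isMaxOn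
    (NormedSpace.sphere_nonempty.mpr zero_le_one)
    (T.continuous.norm.continuousOn)
  have hx₀ : ‖x₀‖ = 1 := mem_sphere_zero_iff_norm.mp hx₀s
  refine ⟨x₀, hx₀, le_antisymm ?_ ?_⟩
  · calc ‖T x₀‖ ≤ ‖T‖ * ‖x₀‖ := T.le_opNorm x₀
      _ = ‖T‖ := by rw [hx₀, mul_one]
  · refine T.opNorm_le_bound (norm_nonneg _) fun x => ?_
    rcases eq_or_ne x 0 with rfl | hx
    · simp
    · have hxn : ‖x‖ ≠ 0 := norm_ne_zero_iff.mpr hx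
      have hmem : (‖x‖⁻¹ • x) ∈ Metric.sphere (0 : E) 1 := by
        simp [norm_smul, abs_of_nonneg (inv_nonneg.mpr (norm_nonneg x)),
          inv_mul_cancel₀ hxn]
      have := hmax hmem
      have this2 : ‖x‖⁻¹ * ‖T x‖ ≤ ‖T x₀‖ := by
        have h3 : T (‖x‖⁻¹ • x) = ‖x‖⁻¹ • T x := by rw [_root_.map_smul]
        have := this
        simp only [Set.mem_setOf_eq] at this
        rwa [h3, norm_smul, Real.norm_eq_abs,
          abs_of_nonneg (inv_nonneg.mpr (norm_nonneg x))] at this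
      calc ‖T x‖ = ‖x‖ * (‖x‖⁻¹ * ‖T x‖) := by field_simp
        _ ≤ ‖x‖ * ‖T x₀‖ := by
            exact mul_le_mul_of_nonneg_left this2 (norm_nonneg x)
        _ = ‖T x₀‖ * ‖x‖ := mul_comm _ _

lemma specCLM_sub {m n : ℕ} (A B : Matrix (Fin m) (Fin n) ℝ) :
    specCLM (A - B) = specCLM A - specCLM B := by
  ext x i; simp [specCLM, Matrix.toEuclideanLin_apply, Matrix.sub_mulVec]

lemma specCLM_zero {m n : ℕ} : specCLM (0 : Matrix (Fin m) (Fin n) ℝ) = 0 := by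
  ext x i; simp [specCLM, Matrix.toEuclideanLin_apply]

lemma specNorm_neg {m n : ℕ} (A : Matrix (Fin m) (Fin n) ℝ) : specNorm (-A) = specNorm A := by
  have : -A = 0 - A := (zero_sub A).symm
  rw [specNorm_eq, specNorm_eq, this, specCLM_sub, specCLM_zero, zero_sub, norm_neg]

lemma inner_specCLM_symm {n : ℕ} {A : Matrix (Fin n) (Fin n) ℝ} (hA : Aᵀ = A)
    (x y : EuclideanSpace ℝ (Fin n)) :
    ⟪specCLM A x, y⟫ = ⟪x, specCLM A y⟫ := by
  rw [inner_specCLM_left, hA]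

lemma inner_form_le {m n : ℕ} (A : Matrix (Fin m) (Fin n) ℝ) (B : Matrix (Fin n) (Fin m) ℝ)
    (x : EuclideanSpace ℝ (Fin n)) (y : EuclideanSpace ℝ (Fin m)) :
    ⟪y, specCLM A x⟫ ≤ specNorm A * (‖y‖ * ‖x‖) := by
  calc ⟪y, specCLM A x⟫ ≤ ‖y‖ * ‖specCLM A x‖ := real_inner_le_norm _ _
    _ ≤ ‖y‖ * (specNorm A * ‖x‖) :=
        mul_le_mul_of_nonneg_left (norm_specCLM_le A x) (norm_nonneg _)
    _ = specNorm A * (‖y‖ * ‖x‖) := by ring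

lemma psd_specNorm_le {n : ℕ} {A : Matrix (Fin n) (Fin n) ℝ} (hA : Aᵀ = A) {m : ℝ}
    (hm : 0 ≤ m) (hpsd : ∀ x : EuclideanSpace ℝ (Fin n), 0 ≤ ⟪x, specCLM A x⟫)
    (hform : ∀ x : EuclideanSpace ℝ (Fin n), ‖x‖ = 1 → ⟪x, specCLM A x⟫ ≤ m) :
    specNorm A ≤ m := by
  have hform' : ∀ x : EuclideanSpace ℝ (Fin n), ⟪x, specCLM A x⟫ ≤ m * ‖x‖ ^ 2 := by
    intro x
    rcases eq_or_ne x 0 with rfl | hx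
    · simp
    · have hxn : ‖x‖ ≠ 0 := norm_ne_zero_iff.mpr hx
      have h1 := hform (‖x‖⁻¹ • x) (by
        simp [norm_smul, abs_of_nonneg (inv_nonneg.mpr (norm_nonneg x)),
          inv_mul_cancel₀ hxn])
      rw [_root_.map_smul, real_inner_smul_left, real_inner_smul_right] at h1
      have h2 : ⟪x, specCLM A x⟫ = ‖x‖ ^ 2 * (‖x‖⁻¹ * (‖x‖⁻¹ * ⟪x, specCLM A x⟫)) := by
        field_simp
      rw [h2]
      calc ‖x‖ ^ 2 * (‖x‖⁻¹ * (‖x‖⁻¹ * ⟪x, specCLM A x⟫)) ≤ ‖x‖ ^ 2 * m := by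
            apply mul_le_mul_of_nonneg_left h1 (by positivity)
        _ = m * ‖x‖ ^ 2 := mul_comm _ _
  rw [specNorm_eq]
  refine (specCLM A).opNorm_le_bound hm fun x => ?_
  rcases eq_or_ne (specCLM A x) 0 with h0 | h0
  · rw [h0, norm_zero]; positivity
  · rcases eq_or_ne x 0 with rfl | hx
    · simp at h0
    · set y : EuclideanSpace ℝ (Fin n) := (‖x‖ * ‖specCLM A x‖⁻¹) • specCLM A x with hy
      have hAxn : ‖specCLM A x‖ ≠ 0 := norm_ne_zero_iff.mpr h0
      have hyn : ‖y‖ = ‖x‖ := by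
        rw [hy, norm_smul, Real.norm_eq_abs, abs_of_nonneg (by positivity)]
        field_simp
      -- 4⟪Ax, y⟫ = Q(x+y) - Q(x-y)
      have hsymm : ∀ u v : EuclideanSpace ℝ (Fin n),
          ⟪u, specCLM A v⟫ = ⟪specCLM A u, v⟫ := fun u v => by
        rw [inner_specCLM_symm hA]
      have hkey : 4 * ⟪specCLM A x, y⟫
          = ⟪x + y, specCLM A (x + y)⟫ - ⟪x - y, specCLM A (x - y)⟫ := by
        have e1 : specCLM A (x + y) = specCLM A x + specCLM A y := by rw [map_add]
        have e2 : specCLM A (x - y) = specCLM A x - specCLM A y := by rw [map_sub]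
        rw [e1, e2, inner_add_right, inner_add_left, inner_add_left,
          inner_sub_right, inner_sub_left, inner_sub_left]
        have h3 : ⟪y, specCLM A x⟫ = ⟪specCLM A x, y⟫ := real_inner_comm _ _
        have h4 : ⟪x, specCLM A y⟫ = ⟪specCLM A x, y⟫ := hsymm x y
        rw [h3, h4]; ring
      have hQxy : ⟪x + y, specCLM A (x + y)⟫ ≤ m * ‖x + y‖ ^ 2 := hform' _
      have hQxy' : 0 ≤ ⟪x - y, specCLM A (x - y)⟫ := hpsd _
      have hb : 4 * ⟪specCLM A x, y⟫ ≤ m * (2 * ‖x‖) ^ 2 := by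
        rw [hkey]
        calc ⟪x + y, specCLM A (x+y)⟫ - ⟪x - y, specCLM A (x-y)⟫
            ≤ m * ‖x + y‖ ^ 2 - 0 := by linarith
          _ = m * ‖x + y‖ ^ 2 := by ring
          _ ≤ m * (2 * ‖x‖) ^ 2 := by
              apply mul_le_mul_of_nonneg_left _ hm
              have : ‖x + y‖ ≤ 2 * ‖x‖ := by
                calc ‖x + y‖ ≤ ‖x‖ + ‖y‖ := norm_add_le _ _
                  _ = 2 * ‖x‖ := by rw [hyn]; ring
              calc ‖x + y‖ ^ 2 ≤ (2 * ‖x‖) ^ 2 := by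
                    apply pow_le_pow_left₀ (norm_nonneg _) this
                _ = (2 * ‖x‖) ^ 2 := rfl
      have hinner : ⟪specCLM A x, y⟫ = ‖x‖ * ‖specCLM A x‖ := by
        rw [hy, real_inner_smul_right, real_inner_self_eq_norm_sq]
        field_simp
      rw [hinner] at hb
      have hxn : (0:ℝ) < ‖x‖ := norm_pos_iff.mpr hx
      nlinarith [norm_nonneg (specCLM A x)]

lemma inner_diag {n : ℕ} (d : Fin n → ℝ) (x : EuclideanSpace ℝ (Fin n)) :
    ⟪x, specCLM (Matrix.diagonal d) x⟫ = ∑ i, d i * x i ^ 2 := by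
  rw [specCLM_apply]
  rw [PiLp.inner_apply]
  apply Finset.sum_congr rfl
  intro i _
  simp [Matrix.mulVec_diagonal]
  ring

lemma norm_sq_eq_sum {n : ℕ} (x : EuclideanSpace ℝ (Fin n)) : ‖x‖ ^ 2 = ∑ i, x i ^ 2 := by
  rw [← real_inner_self_eq_norm_sq, PiLp.inner_apply]
  apply Finset.sum_congr rfl
  intro i _
  simp

lemma inner_diag_le {n : ℕ} {d : Fin n → ℝ} {b : ℝ} (hd : ∀ i, d i ≤ b)
    (x : EuclideanSpace ℝ (Fin n)) :
    ⟪x, specCLM (Matrix.diagonal d) x⟫ ≤ b * ‖x‖ ^ 2 := by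
  rw [inner_diag, norm_sq_eq_sum, Finset.mul_sum]
  apply Finset.sum_le_sum
  intro i _
  apply mul_le_mul_of_nonneg_right (hd i) (sq_nonneg _)

lemma le_inner_diag {n : ℕ} {d : Fin n → ℝ} {a : ℝ} (hd : ∀ i, a ≤ d i)
    (x : EuclideanSpace ℝ (Fin n)) :
    a * ‖x‖ ^ 2 ≤ ⟪x, specCLM (Matrix.diagonal d) x⟫ := by
  rw [inner_diag, norm_sq_eq_sum, Finset.mul_sum]
  apply Finset.sum_le_sum
  intro i _
  apply mul_le_mul_of_nonneg_right (hd i) (sq_nonneg _)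

lemma specNorm_eq_zero_iff {m n : ℕ} {A : Matrix (Fin m) (Fin n) ℝ} :
    specNorm A = 0 ↔ A = 0 := by
  rw [specNorm_eq, ContinuousLinearMap.opNorm_zero_iff]
  constructor
  · intro h
    have : Matrix.toEuclideanLin A = 0 := by
      have h2 := congrArg ContinuousLinearMap.toLinearMap h
      simpa [specCLM] using h2
    exact (map_eq_zero_iff _ (Matrix.toEuclideanLin (𝕜 := ℝ)).injective).mp this
  · rintro rfl
    exact specCLM_zero

lemma nontrivial_euclidean {k : ℕ} (hk : Nonempty (Fin k)) :
    Nontrivial (EuclideanSpace ℝ (Fin k)) := by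
  obtain ⟨i⟩ := hk
  refine ⟨EuclideanSpace.single i 1, 0, fun h => ?_⟩
  have := congrFun (congrArg (fun x : EuclideanSpace ℝ (Fin k) => (x : Fin k → ℝ)) h) i
  simp at this

lemma nonempty_of_specNorm_pos {m n : ℕ} {A : Matrix (Fin m) (Fin n) ℝ}
    (h : 0 < specNorm A) : Nonempty (Fin m) ∧ Nonempty (Fin n) := by
  by_contra hc
  apply h.ne'
  rw [specNorm_eq_zero_iff]
  ext i j
  exact absurd ⟨⟨i⟩, ⟨j⟩⟩ hc

lemma exists_sing_pair {m n : ℕ} (S : Matrix (Fin m) (Fin n) ℝ) (hσ : 0 < specNorm S) :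
    ∃ (u : EuclideanSpace ℝ (Fin n)) (v : EuclideanSpace ℝ (Fin m)), ‖u‖ = 1 ∧ ‖v‖ = 1 ∧
      specCLM S u = specNorm S • v ∧ specCLM Sᵀ v = specNorm S • u := by
  obtain ⟨hm, hn⟩ := nonempty_of_specNorm_pos hσ
  haveI := nontrivial_euclidean hn
  obtain ⟨u, hu, hmax⟩ := exists_norm_max (specCLM S)
  set σ := specNorm S with hσdef
  rw [← specNorm_eq] at hmax
  have hσn : σ ≠ 0 := hσ.ne'
  set v : EuclideanSpace ℝ (Fin m) := σ⁻¹ • specCLM S u with hv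
  have hvn : ‖v‖ = 1 := by
    rw [hv, norm_smul, Real.norm_eq_abs, abs_of_nonneg (inv_nonneg.mpr hσ.le), hmax]
    field_simp
    exact hσdef.symm
  have hSu : specCLM S u = σ • v := by
    rw [hv, smul_smul, mul_inv_cancel₀ hσn, one_smul]
  refine ⟨u, v, hu, hvn, hSu, ?_⟩
  set w := specCLM Sᵀ v with hw
  have hinner : ⟪w, u⟫ = σ := by
    rw [hw, inner_specCLM_left, Matrix.transpose_transpose, hSu,
      real_inner_smul_right, real_inner_self_eq_norm_sq, hvn]
    simp
  have hwn : ‖w‖ ≤ σ := by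
    calc ‖w‖ ≤ specNorm Sᵀ * ‖v‖ := norm_specCLM_le _ _
      _ = σ := by rw [specNorm_transpose, hvn, mul_one]
  have hzero : ‖w - σ • u‖ ^ 2 ≤ 0 := by
    rw [norm_sub_sq_real]
    rw [real_inner_smul_right, hinner, norm_smul, Real.norm_eq_abs, abs_of_nonneg hσ.le, hu]
    nlinarith [norm_nonneg w, hwn]
  have : w - σ • u = 0 := by
    have := le_antisymm hzero (sq_nonneg _)
    have h2 : ‖w - σ • u‖ = 0 := by
      nlinarith [norm_nonneg (w - σ • u)]
    exact norm_eq_zero.mp h2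
  linear_combination (norm := module) this

lemma exists_norm_min {E F : Type*} [NormedAddCommGroup E] [NormedSpace ℝ E]
    [NormedAddCommGroup F] [NormedSpace ℝ F] [FiniteDimensional ℝ E] [Nontrivial E]
    (T : E →L[ℝ] F) : ∃ x : E, ‖x‖ = 1 ∧ ∀ y : E, ‖y‖ = 1 → ‖T x‖ ≤ ‖T y‖ := by
  obtain ⟨x₀, hx₀s, hmin⟩ := (isCompact_sphere (0 : E) 1).exists_isMinOn
    (NormedSpace.sphere_nonempty.mpr zero_le_one)
    (T.continuous.norm.continuousOn)
  refine ⟨x₀, mem_sphere_zero_iff_norm.mp hx₀s, fun y hy => ?_⟩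
  exact hmin (mem_sphere_zero_iff_norm.mpr hy)

lemma specNorm_one_sub_crossed {r : ℕ} (A : Matrix (Fin r) (Fin r) ℝ) (hA : specNorm A ≤ 1)
    {c : ℝ} (x₀ : EuclideanSpace ℝ (Fin r)) (hx₀ : ‖x₀‖ = 1) (hatt : ‖specCLM A x₀‖ = c)
    (hmin : ∀ y : EuclideanSpace ℝ (Fin r), ‖y‖ = 1 → c ≤ ‖specCLM A y‖) :
    specNorm (1 - Aᵀ * A) = 1 - c ^ 2 := by
  have hc0 : 0 ≤ c := hatt ▸ norm_nonneg _
  have hc1 : c ≤ 1 := by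
    rw [← hatt]
    calc ‖specCLM A x₀‖ ≤ specNorm A * ‖x₀‖ := norm_specCLM_le _ _
      _ ≤ 1 := by rw [hx₀, mul_one]; exact hA
  have hsym : (1 - Aᵀ * A)ᵀ = 1 - Aᵀ * A := by
    simp [Matrix.transpose_sub, Matrix.transpose_mul]
  have hform : ∀ x : EuclideanSpace ℝ (Fin r),
      ⟪x, specCLM (1 - Aᵀ * A) x⟫ = ‖x‖ ^ 2 - ‖specCLM A x‖ ^ 2 := by
    intro x
    rw [specCLM_sub, specCLM_one]
    have h1 : specCLM (Aᵀ * A) x = specCLM Aᵀ (specCLM A x) := by rw [specCLM_mul]; rfl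
    simp only [ContinuousLinearMap.sub_apply, ContinuousLinearMap.id_apply]
    rw [inner_sub_right, h1, ← inner_specCLM_left, real_inner_self_eq_norm_sq,
      real_inner_self_eq_norm_sq]
  have hcontr : ∀ x : EuclideanSpace ℝ (Fin r), ‖specCLM A x‖ ≤ ‖x‖ := by
    intro x
    calc ‖specCLM A x‖ ≤ specNorm A * ‖x‖ := norm_specCLM_le _ _
      _ ≤ 1 * ‖x‖ := mul_le_mul_of_nonneg_right hA (norm_nonneg _)
      _ = ‖x‖ := one_mul _
  have hpsd : ∀ x : EuclideanSpace ℝ (Fin r), 0 ≤ ⟪x, specCLM (1 - Aᵀ * A) x⟫ := by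
    intro x
    rw [hform]
    nlinarith [hcontr x, norm_nonneg x, norm_nonneg (specCLM A x)]
  refine le_antisymm ?_ ?_
  · refine psd_specNorm_le hsym (by nlinarith) hpsd fun x hx => ?_
    rw [hform, hx]
    nlinarith [hmin x hx, norm_nonneg (specCLM A x)]
  · have := inner_form_le (1 - Aᵀ * A) 0 x₀ x₀
    rw [hform, hx₀, hatt] at this
    calc (1 : ℝ) - c ^ 2 = 1 ^ 2 - c ^ 2 := by ring
      _ ≤ specNorm (1 - Aᵀ * A) * (1 * 1) := this
      _ = specNorm (1 - Aᵀ * A) := by ring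

lemma min_le_min_transpose {r : ℕ} [Nonempty (Fin r)] (A : Matrix (Fin r) (Fin r) ℝ)
    {c c' : ℝ} (x₀ : EuclideanSpace ℝ (Fin r)) (hx₀ : ‖x₀‖ = 1)
    (hatt : ‖specCLM A x₀‖ = c)
    (hmin' : ∀ y : EuclideanSpace ℝ (Fin r), ‖y‖ = 1 → c' ≤ ‖specCLM Aᵀ y‖) :
    c' ≤ c := by
  haveI := nontrivial_euclidean (inferInstance : Nonempty (Fin r))
  have hc0 : 0 ≤ c := hatt ▸ norm_nonneg _
  rcases eq_or_ne A.det 0 with hdet | hdet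
  · -- singular case: Aᵀ has kernel vector
    have hdet' : Aᵀ.det = 0 := by rw [Matrix.det_transpose]; exact hdet
    obtain ⟨v, hv0, hv⟩ := (Matrix.exists_mulVec_eq_zero_iff).mpr hdet'
    set v' : EuclideanSpace ℝ (Fin r) := (WithLp.equiv 2 (Fin r → ℝ)).symm v with hv'
    have hv'0 : v' ≠ 0 := by
      intro h
      apply hv0
      have := congrArg (WithLp.equiv 2 (Fin r → ℝ)) h
      simpa [hv'] using this
    have hker : specCLM Aᵀ v' = 0 := by
      ext i
      rw [specCLM_apply]
      simp [hv', hv]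
    have hnv : ‖v'‖ ≠ 0 := norm_ne_zero_iff.mpr hv'0
    have hval := hmin' (‖v'‖⁻¹ • v') (by
      simp [norm_smul, abs_of_nonneg (inv_nonneg.mpr (norm_nonneg v')), inv_mul_cancel₀ hnv])
    rw [_root_.map_smul, hker, smul_zero, norm_zero] at hval
    linarith
  · have hunit : IsUnit A.det := isUnit_iff_ne_zero.mpr hdet
    have hunit' : IsUnit Aᵀ.det := by rw [Matrix.det_transpose]; exact hunit
    set β := specNorm A⁻¹ with hβ
    have hβ0 : 0 < β := by
      rcases (specNorm_nonneg A⁻¹).lt_or_eq with h | h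
      · exact h
      · exfalso
        have hA0 : A⁻¹ = 0 := specNorm_eq_zero_iff.mp h.symm
        have h1 : A * A⁻¹ = 1 := Matrix.mul_nonsing_inv A hunit
        rw [hA0, Matrix.mul_zero] at h1
        obtain ⟨i⟩ := (inferInstance : Nonempty (Fin r))
        have := congrFun (congrFun h1 i) i
        simp at this
    -- β⁻¹ ≤ c
    have hlow : β⁻¹ ≤ c := by
      have h1 : specCLM A⁻¹ (specCLM A x₀) = x₀ := by
        have h2 : specCLM A⁻¹ (specCLM A x₀) = specCLM (A⁻¹ * A) x₀ := by
          rw [specCLM_mul]; rfl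
        rw [h2, Matrix.nonsing_inv_mul A hunit, specCLM_one]; rfl
      have h3 : (1:ℝ) ≤ β * c := by
        calc (1:ℝ) = ‖x₀‖ := hx₀.symm
          _ = ‖specCLM A⁻¹ (specCLM A x₀)‖ := by rw [h1]
          _ ≤ β * ‖specCLM A x₀‖ := norm_specCLM_le _ _
          _ = β * c := by rw [hatt]
      rw [inv_le_iff_one_le_mul₀ hβ0]
      calc (1:ℝ) ≤ β * c := h3
        _ = c * β := mul_comm _ _
    -- c' ≤ β⁻¹ : use maximizer of (Aᵀ)⁻¹
    have hβt : specNorm Aᵀ⁻¹ = β := by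
      rw [← Matrix.transpose_nonsing_inv, specNorm_transpose]
    obtain ⟨y₀, hy₀, hymax⟩ := exists_norm_max (specCLM Aᵀ⁻¹)
    rw [← specNorm_eq, hβt] at hymax
    have hAy0 : specCLM Aᵀ⁻¹ y₀ ≠ 0 := by
      intro h
      rw [h, norm_zero] at hymax
      exact hβ0.ne hymax
    set x₁ : EuclideanSpace ℝ (Fin r) := β⁻¹ • specCLM Aᵀ⁻¹ y₀ with hx₁
    have hx₁n : ‖x₁‖ = 1 := by
      rw [hx₁, norm_smul, Real.norm_eq_abs, abs_of_nonneg (inv_nonneg.mpr hβ0.le), hymax]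
      field_simp
    have hAx₁ : specCLM Aᵀ x₁ = β⁻¹ • y₀ := by
      rw [hx₁, _root_.map_smul]
      congr 1
      have h2 : specCLM Aᵀ (specCLM Aᵀ⁻¹ y₀) = specCLM (Aᵀ * Aᵀ⁻¹) y₀ := by
        rw [specCLM_mul]; rfl
      rw [h2, Matrix.mul_nonsing_inv _ hunit', specCLM_one]; rfl
    have := hmin' x₁ hx₁n
    rw [hAx₁, norm_smul, Real.norm_eq_abs, abs_of_nonneg (inv_nonneg.mpr hβ0.le), hy₀,
      mul_one] at this
    linarith

lemma specNorm_one_sub_symm {r : ℕ} (A : Matrix (Fin r) (Fin r) ℝ) (hA : specNorm A ≤ 1) :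
    specNorm (1 - Aᵀ * A) = specNorm (1 - A * Aᵀ) := by
  rcases isEmpty_or_nonempty (Fin r) with he | hne
  · have h1 : (1 - Aᵀ * A : Matrix (Fin r) (Fin r) ℝ) = 0 := by
      ext i j; exact (he.false i).elim
    have h2 : (1 - A * Aᵀ : Matrix (Fin r) (Fin r) ℝ) = 0 := by
      ext i j; exact (he.false i).elim
    rw [h1, h2]
  · haveI := nontrivial_euclidean hne
    obtain ⟨x₀, hx₀, hminA⟩ := exists_norm_min (specCLM A)
    obtain ⟨x₁, hx₁, hminAt⟩ := exists_norm_min (specCLM Aᵀ)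
    set c := ‖specCLM A x₀‖ with hc
    set c' := ‖specCLM Aᵀ x₁‖ with hc'
    have hcc' : c' ≤ c := min_le_min_transpose A x₀ hx₀ rfl (fun y hy => hminAt y hy)
    have hc'c : c ≤ c' := by
      have := min_le_min_transpose Aᵀ x₁ hx₁ rfl (fun y hy => by
        rw [Matrix.transpose_transpose]; exact hminA y hy)
      exact this
    have heq : c = c' := le_antisymm hc'c hcc'
    rw [specNorm_one_sub_crossed A hA x₀ hx₀ rfl (fun y hy => hminA y hy)]
    have h2 := specNorm_one_sub_crossed Aᵀ (by rw [specNorm_transpose]; exact hA) x₁ hx₁ rfl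
      (fun y hy => hminAt y hy)
    rw [Matrix.transpose_transpose] at h2
    rw [h2, ← hc, ← hc', heq]

lemma specCLM_add {m n : ℕ} (A B : Matrix (Fin m) (Fin n) ℝ) :
    specCLM (A + B) = specCLM A + specCLM B := by
  ext x i; simp [specCLM, Matrix.toEuclideanLin_apply, Matrix.add_mulVec]

lemma pythagoras {n r s : ℕ} {U : Matrix (Fin n) (Fin r) ℝ} {V : Matrix (Fin n) (Fin s) ℝ}
    (hcomp : U * Uᵀ + V * Vᵀ = 1) (x : EuclideanSpace ℝ (Fin n)) :
    ‖specCLM Uᵀ x‖ ^ 2 + ‖specCLM Vᵀ x‖ ^ 2 = ‖x‖ ^ 2 := by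
  have h1 : ∀ {k : ℕ} (W : Matrix (Fin n) (Fin k) ℝ),
      ‖specCLM Wᵀ x‖ ^ 2 = ⟪x, specCLM (W * Wᵀ) x⟫ := by
    intro k W
    rw [← real_inner_self_eq_norm_sq, inner_specCLM_left, Matrix.transpose_transpose]
    have : specCLM W (specCLM Wᵀ x) = specCLM (W * Wᵀ) x := by rw [specCLM_mul]; rfl
    rw [this]
  rw [h1 U, h1 V, ← inner_add_right]
  have : specCLM (U * Uᵀ) x + specCLM (V * Vᵀ) x = specCLM (U * Uᵀ + V * Vᵀ) x := by
    rw [specCLM_add]; rfl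
  rw [this, hcomp, specCLM_one, ContinuousLinearMap.id_apply, real_inner_self_eq_norm_sq]

lemma euclid_ne_zero {k : ℕ} {c : Fin k → ℝ} (hc : c ≠ 0) :
    ((WithLp.equiv 2 (Fin k → ℝ)).symm c : EuclideanSpace ℝ (Fin k)) ≠ 0 := by
  intro h
  apply hc
  have := congrArg (WithLp.equiv 2 (Fin k → ℝ)) h
  simpa using this

lemma weyl_bound {n r : ℕ}
    (Q Qhat : Matrix (Fin n) (Fin n) ℝ)
    (U : Matrix (Fin n) (Fin r) ℝ)
    (Uhat : Matrix (Fin n) (Fin r) ℝ) (Uhatperp : Matrix (Fin n) (Fin (n - r)) ℝ)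
    (hUhat : Uhatᵀ * Uhat = 1) (hUhatperp : Uhatperpᵀ * Uhatperp = 1)
    (hUhUp : Uhatᵀ * Uhatperp = 0)
    (Λhat₁ : Fin r → ℝ) (Λhat₂ : Fin (n - r) → ℝ)
    (hQhatUhat : Qhat * Uhat = Uhat * Matrix.diagonal Λhat₁)
    (hQhatUhatp : Qhat * Uhatperp = Uhatperp * Matrix.diagonal Λhat₂)
    (hleading : ∀ i j, Λhat₂ j ≤ Λhat₁ i)
    (b : ℝ)
    (hQbound : ∀ x : EuclideanSpace ℝ (Fin n), specCLM Uᵀ x = 0 →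
      ⟪x, specCLM Q x⟫ ≤ b * ‖x‖ ^ 2)
    (i : Fin (n - r)) : Λhat₂ i ≤ b + specNorm (Qhat - Q) := by
  classical
  set W : Matrix (Fin n) (Fin (r + 1)) ℝ :=
    Matrix.of (fun p (j : Fin (r + 1)) =>
      if h : (j : ℕ) < r then Uhat p ⟨j, h⟩ else Uhatperp p i) with hW
  set d : Fin (r + 1) → ℝ :=
    fun j => if h : (j : ℕ) < r then Λhat₁ ⟨j, h⟩ else Λhat₂ i with hd
  have hWW : Wᵀ * W = 1 := by
    ext j k
    simp only [Matrix.mul_apply, Matrix.transpose_apply, hW, Matrix.of_apply]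
    by_cases hj : (j : ℕ) < r <;> by_cases hk : (k : ℕ) < r <;>
      simp only [hj, hk, dif_pos, dif_neg, not_false_iff]
    · have h1 : ∑ p, Uhat p ⟨j, hj⟩ * Uhat p ⟨k, hk⟩
          = (Uhatᵀ * Uhat) ⟨j, hj⟩ ⟨k, hk⟩ := by
        simp [Matrix.mul_apply]
      rw [h1, hUhat]
      by_cases hjk : j = k
      · subst hjk; simp [Matrix.one_apply]
      · have : (⟨(j : ℕ), hj⟩ : Fin r) ≠ ⟨(k : ℕ), hk⟩ := by
          intro h; apply hjk
          have hv := congrArg Fin.val h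
          exact Fin.ext hv
        simp [Matrix.one_apply, this, Matrix.one_apply_ne, hjk]
    · have h1 : ∑ p, Uhat p ⟨j, hj⟩ * Uhatperp p i
          = (Uhatᵀ * Uhatperp) ⟨j, hj⟩ i := by simp [Matrix.mul_apply]
      rw [h1, hUhUp]
      have hjk : j ≠ k := by
        intro h; subst h; exact hk hj
      simp [Matrix.one_apply, hjk]
    · have h1 : ∑ p, Uhatperp p i * Uhat p ⟨k, hk⟩
          = (Uhatᵀ * Uhatperp) ⟨k, hk⟩ i := by
        rw [Matrix.mul_apply]
        apply Finset.sum_congr rfl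
        intro p _
        simp [mul_comm]
      rw [h1, hUhUp]
      have hjk : j ≠ k := by
        intro h; subst h; exact hj hk
      simp [Matrix.one_apply, hjk]
    · have h1 : ∑ p, Uhatperp p i * Uhatperp p i
          = (Uhatperpᵀ * Uhatperp) i i := by simp [Matrix.mul_apply]
      rw [h1, hUhatperp]
      have hjk : j = k := by
        have hj' : (j : ℕ) = r := by omega
        have hk' : (k : ℕ) = r := by omega
        exact Fin.ext (hj'.trans hk'.symm)
      subst hjk
      simp [Matrix.one_apply]
  have hQW : Qhat * W = W * Matrix.diagonal d := by
    ext p j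
    rw [Matrix.mul_diagonal]
    by_cases hj : (j : ℕ) < r
    · have h1 : (Qhat * W) p j = (Qhat * Uhat) p ⟨j, hj⟩ := by
        simp [Matrix.mul_apply, hW, hj]
      rw [h1, hQhatUhat, Matrix.mul_diagonal]
      simp [hW, hd, hj]
    · have h1 : (Qhat * W) p j = (Qhat * Uhatperp) p i := by
        simp [Matrix.mul_apply, hW, hj]
      rw [h1, hQhatUhatp, Matrix.mul_diagonal]
      simp [hW, hd, hj]
  -- kernel vector of Uᵀ * W
  obtain ⟨c, hc0, hBc⟩ : ∃ c : Fin (r + 1) → ℝ, c ≠ 0 ∧ (Uᵀ * W) *ᵥ c = 0 := by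
    by_contra hcon
    push_neg at hcon
    have hinj : Function.Injective (Matrix.mulVecLin (Uᵀ * W)) := by
      intro c₁ c₂ h
      have h2 : (Uᵀ * W) *ᵥ (c₁ - c₂) = 0 := by
        rw [Matrix.mulVec_sub]
        simp only [Matrix.mulVecLin_apply] at h
        rw [h, sub_self]
      by_contra hne
      exact (hcon (c₁ - c₂) (sub_ne_zero.mpr hne)) h2
    have := LinearMap.finrank_le_finrank_of_injective hinj
    simp [Module.finrank_pi] at this
  set c' : EuclideanSpace ℝ (Fin (r + 1)) := (WithLp.equiv 2 (Fin (r + 1) → ℝ)).symm c with hc'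
  have hc'0 : c' ≠ 0 := euclid_ne_zero hc0
  have hc'n : 0 < ‖c'‖ := norm_pos_iff.mpr hc'0
  set x : EuclideanSpace ℝ (Fin n) := specCLM W c' with hx
  have hxn : ‖x‖ = ‖c'‖ := norm_specCLM_isometry hWW c'
  have hUx : specCLM Uᵀ x = 0 := by
    have h1 : specCLM Uᵀ x = specCLM (Uᵀ * W) c' := by
      rw [hx, specCLM_mul]; rfl
    rw [h1]
    ext k
    rw [specCLM_apply]
    simp [hc', hBc]
  -- quadratic forms
  have hQhatform : Λhat₂ i * ‖x‖ ^ 2 ≤ ⟪x, specCLM Qhat x⟫ := by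
    have h1 : specCLM Qhat x = specCLM (Qhat * W) c' := by
      rw [hx, specCLM_mul]; rfl
    have h2 : ⟪x, specCLM Qhat x⟫ = ⟪c', specCLM (Wᵀ * (Qhat * W)) c'⟫ := by
      rw [h1, hx, inner_specCLM_left]
      congr 1
      rw [specCLM_mul Wᵀ (Qhat * W)]; rfl
    have h3 : Wᵀ * (Qhat * W) = Matrix.diagonal d := by
      rw [hQW, ← Matrix.mul_assoc, hWW, Matrix.one_mul]
    rw [h2, h3, hxn]
    refine le_inner_diag (fun j => ?_) c'
    rw [hd]
    by_cases hj : (j : ℕ) < r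
    · simp only [hj, dif_pos]; exact hleading _ _
    · simp only [hj, dif_neg, not_false_iff]; exact le_refl _
  have hQform : ⟪x, specCLM Q x⟫ ≤ b * ‖x‖ ^ 2 := hQbound x hUx
  have hdiff : ⟪x, specCLM (Qhat - Q) x⟫ ≤ specNorm (Qhat - Q) * ‖x‖ ^ 2 := by
    calc ⟪x, specCLM (Qhat - Q) x⟫ ≤ specNorm (Qhat - Q) * (‖x‖ * ‖x‖) :=
          inner_form_le _ 0 x x
      _ = specNorm (Qhat - Q) * ‖x‖ ^ 2 := by ring
  have hsplit : ⟪x, specCLM (Qhat - Q) x⟫ = ⟪x, specCLM Qhat x⟫ - ⟪x, specCLM Q x⟫ := by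
    rw [specCLM_sub, ContinuousLinearMap.sub_apply, inner_sub_right]
  have hfinal : Λhat₂ i * ‖x‖ ^ 2 - b * ‖x‖ ^ 2 ≤ specNorm (Qhat - Q) * ‖x‖ ^ 2 := by
    rw [hsplit] at hdiff
    linarith
  have hx2 : 0 < ‖x‖ ^ 2 := by rw [hxn]; positivity
  nlinarith

set_option maxHeartbeats 4000000 in
/-- **Sin-theta (Davis–Kahan / Cai–Zhang) theorem.**
Let `Q, Q̂` be symmetric with spectral decompositions `Q = U Λ₁ Uᵀ + U⊥ Λ₂ U⊥ᵀ` and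
`Q̂ = Û Λ̂₁ Ûᵀ + Û⊥ Λ̂₂ Û⊥ᵀ`, where `U, Û` are the `r` leading orthonormal eigenvectors
(i.e. `Λ̂₂ ≤ Λ̂₁` entrywise for `Q̂`, and the eigenvalues of `Q` satisfy
`Λ₂ ≤ σ_{r+1}(Q) = b < a = σ_r(Q) ≤ Λ₁`). Then
`‖Û Ûᵀ − U Uᵀ‖ ≤ (2/(a − b)) ‖Q̂ − Q‖`, and moreover `‖Û Ûᵀ − U Uᵀ‖ = ‖Û⊥ᵀ U‖`. -/
theorem sin_theta_theorem
    (n r : ℕ)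
    (Q Qhat : Matrix (Fin n) (Fin n) ℝ)
    (hQ : Qᵀ = Q) (hQhat : Qhatᵀ = Qhat)
    (U : Matrix (Fin n) (Fin r) ℝ) (Uperp : Matrix (Fin n) (Fin (n - r)) ℝ)
    (Uhat : Matrix (Fin n) (Fin r) ℝ) (Uhatperp : Matrix (Fin n) (Fin (n - r)) ℝ)
    (hU : Uᵀ * U = 1) (hUperp : Uperpᵀ * Uperp = 1)
    (hUcomp : U * Uᵀ + Uperp * Uperpᵀ = 1)
    (hUhat : Uhatᵀ * Uhat = 1) (hUhatperp : Uhatperpᵀ * Uhatperp = 1)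
    (hUhatcomp : Uhat * Uhatᵀ + Uhatperp * Uhatperpᵀ = 1)
    (Λ₁ : Fin r → ℝ) (Λ₂ : Fin (n - r) → ℝ)
    (Λhat₁ : Fin r → ℝ) (Λhat₂ : Fin (n - r) → ℝ)
    (hQdecomp : Q = U * Matrix.diagonal Λ₁ * Uᵀ + Uperp * Matrix.diagonal Λ₂ * Uperpᵀ)
    (hQhatdecomp : Qhat = Uhat * Matrix.diagonal Λhat₁ * Uhatᵀ
        + Uhatperp * Matrix.diagonal Λhat₂ * Uhatperpᵀ)
    (hleading : ∀ i j, Λhat₂ j ≤ Λhat₁ i)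
    (a b : ℝ) (hgap : b < a)
    (ha : ∀ i, a ≤ Λ₁ i) (hb : ∀ j, Λ₂ j ≤ b) :
    specNorm (Uhat * Uhatᵀ - U * Uᵀ) ≤ (2 / (a - b)) * specNorm (Qhat - Q)
    ∧ specNorm (Uhat * Uhatᵀ - U * Uᵀ) = specNorm (Uhatperpᵀ * U) := by
  -- orthogonality facts
  have orth : ∀ {s t : ℕ} (V : Matrix (Fin n) (Fin s) ℝ) (W : Matrix (Fin n) (Fin t) ℝ),
      Vᵀ * V = 1 → Wᵀ * W = 1 → V * Vᵀ + W * Wᵀ = 1 → Wᵀ * V = 0 := by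
    intro s t V W hV hW hcomp
    have h : Wᵀ * V = Wᵀ * V * (Vᵀ * V) + Wᵀ * W * (Wᵀ * V) := by
      calc Wᵀ * V = Wᵀ * (1 : Matrix (Fin n) (Fin n) ℝ) * V := by rw [Matrix.mul_one]
        _ = Wᵀ * (V * Vᵀ + W * Wᵀ) * V := by rw [hcomp]
        _ = Wᵀ * V * (Vᵀ * V) + Wᵀ * W * (Wᵀ * V) := by
            simp only [Matrix.mul_add, Matrix.add_mul, Matrix.mul_assoc]
    rw [hV, hW, Matrix.mul_one, Matrix.one_mul] at h
    exact left_eq_add.mp h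
  have hUpU : Uperpᵀ * U = 0 := orth U Uperp hU hUperp hUcomp
  have hUhatpUhat : Uhatperpᵀ * Uhat = 0 := orth Uhat Uhatperp hUhat hUhatperp hUhatcomp
  have hUUp : Uᵀ * Uperp = 0 := by
    have h := congrArg Matrix.transpose hUpU
    simpa [Matrix.transpose_mul] using h
  have hUhUp : Uhatᵀ * Uhatperp = 0 := by
    have h := congrArg Matrix.transpose hUhatpUhat
    simpa [Matrix.transpose_mul] using h
  -- eigenrelations
  have hQU : Q * U = U * Matrix.diagonal Λ₁ := by
    calc Q * U = (U * Matrix.diagonal Λ₁ * Uᵀ + Uperp * Matrix.diagonal Λ₂ * Uperpᵀ) * U := by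
          rw [← hQdecomp]
      _ = U * Matrix.diagonal Λ₁ * (Uᵀ * U) + Uperp * Matrix.diagonal Λ₂ * (Uperpᵀ * U) := by
          simp only [Matrix.add_mul, Matrix.mul_assoc]
      _ = U * Matrix.diagonal Λ₁ := by
          rw [hU, hUpU, Matrix.mul_one, Matrix.mul_zero, add_zero]
  have hQhatUhat : Qhat * Uhat = Uhat * Matrix.diagonal Λhat₁ := by
    calc Qhat * Uhat = (Uhat * Matrix.diagonal Λhat₁ * Uhatᵀ
          + Uhatperp * Matrix.diagonal Λhat₂ * Uhatperpᵀ) * Uhat := by rw [← hQhatdecomp]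
      _ = Uhat * Matrix.diagonal Λhat₁ * (Uhatᵀ * Uhat)
          + Uhatperp * Matrix.diagonal Λhat₂ * (Uhatperpᵀ * Uhat) := by
          simp only [Matrix.add_mul, Matrix.mul_assoc]
      _ = Uhat * Matrix.diagonal Λhat₁ := by
          rw [hUhat, hUhatpUhat, Matrix.mul_one, Matrix.mul_zero, add_zero]
  have hQhatUhatp : Qhat * Uhatperp = Uhatperp * Matrix.diagonal Λhat₂ := by
    calc Qhat * Uhatperp = (Uhat * Matrix.diagonal Λhat₁ * Uhatᵀ
          + Uhatperp * Matrix.diagonal Λhat₂ * Uhatperpᵀ) * Uhatperp := by rw [← hQhatdecomp]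
      _ = Uhat * Matrix.diagonal Λhat₁ * (Uhatᵀ * Uhatperp)
          + Uhatperp * Matrix.diagonal Λhat₂ * (Uhatperpᵀ * Uhatperp) := by
          simp only [Matrix.add_mul, Matrix.mul_assoc]
      _ = Uhatperp * Matrix.diagonal Λhat₂ := by
          rw [hUhatperp, hUhUp, Matrix.mul_one, Matrix.mul_zero, zero_add]
  have hUhpQhat : Uhatperpᵀ * Qhat = Matrix.diagonal Λhat₂ * Uhatperpᵀ := by
    have h := congrArg Matrix.transpose hQhatUhatp
    rw [Matrix.transpose_mul, Matrix.transpose_mul, hQhat, Matrix.diagonal_transpose] at h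
    exact h
  -- complements
  have hperp_id : Uperp * Uperpᵀ = 1 - U * Uᵀ := eq_sub_of_add_eq' hUcomp
  have hhatperp_id : Uhatperp * Uhatperpᵀ = 1 - Uhat * Uhatᵀ := eq_sub_of_add_eq' hUhatcomp
  -- norms at most one
  have hnU : specNorm U ≤ 1 := specNorm_isometry_le hU
  have hnUp : specNorm Uperp ≤ 1 := specNorm_isometry_le hUperp
  have hnUh : specNorm Uhat ≤ 1 := specNorm_isometry_le hUhat
  have hnUhp : specNorm Uhatperp ≤ 1 := specNorm_isometry_le hUhatperp
  have hnUt : specNorm Uᵀ ≤ 1 := by rw [specNorm_transpose]; exact hnU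
  have hnUpt : specNorm Uperpᵀ ≤ 1 := by rw [specNorm_transpose]; exact hnUp
  have hnUht : specNorm Uhatᵀ ≤ 1 := by rw [specNorm_transpose]; exact hnUh
  have hnUhpt : specNorm Uhatperpᵀ ≤ 1 := by rw [specNorm_transpose]; exact hnUhp
  have hprod_le_one : ∀ {s t u : ℕ} (V : Matrix (Fin s) (Fin t) ℝ) (W : Matrix (Fin t) (Fin u) ℝ),
      specNorm V ≤ 1 → specNorm W ≤ 1 → specNorm (V * W) ≤ 1 := by
    intro s t u V W h1 h2
    calc specNorm (V * W) ≤ specNorm V * specNorm W := specNorm_mul_le _ _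
      _ ≤ 1 := by nlinarith [specNorm_nonneg V, specNorm_nonneg W]
  ----------------------------------------------------------------
  -- PART 2 : equality specNorm D = specNorm (Uhatperpᵀ * U)
  ----------------------------------------------------------------
  have hSS : (Uhatperpᵀ * U)ᵀ * (Uhatperpᵀ * U) = 1 - (Uhatᵀ * U)ᵀ * (Uhatᵀ * U) := by
    have h1 : (Uhatperpᵀ * U)ᵀ = Uᵀ * Uhatperp := by
      rw [Matrix.transpose_mul, Matrix.transpose_transpose]
    have h2 : (Uhatᵀ * U)ᵀ = Uᵀ * Uhat := by
      rw [Matrix.transpose_mul, Matrix.transpose_transpose]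
    rw [h1, h2]
    calc Uᵀ * Uhatperp * (Uhatperpᵀ * U) = Uᵀ * ((Uhatperp * Uhatperpᵀ) * U) := by
          simp only [Matrix.mul_assoc]
      _ = Uᵀ * ((1 - Uhat * Uhatᵀ) * U) := by rw [hhatperp_id]
      _ = Uᵀ * U - Uᵀ * Uhat * (Uhatᵀ * U) := by
          simp only [Matrix.sub_mul, Matrix.mul_sub, Matrix.one_mul, Matrix.mul_assoc]
      _ = 1 - Uᵀ * Uhat * (Uhatᵀ * U) := by rw [hU]
  have hRR : (Uhatᵀ * Uperp) * (Uhatᵀ * Uperp)ᵀ = 1 - (Uhatᵀ * U) * (Uhatᵀ * U)ᵀ := by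
    have h1 : (Uhatᵀ * Uperp)ᵀ = Uperpᵀ * Uhat := by
      rw [Matrix.transpose_mul, Matrix.transpose_transpose]
    have h2 : (Uhatᵀ * U)ᵀ = Uᵀ * Uhat := by
      rw [Matrix.transpose_mul, Matrix.transpose_transpose]
    rw [h1, h2]
    calc Uhatᵀ * Uperp * (Uperpᵀ * Uhat) = Uhatᵀ * ((Uperp * Uperpᵀ) * Uhat) := by
          simp only [Matrix.mul_assoc]
      _ = Uhatᵀ * ((1 - U * Uᵀ) * Uhat) := by rw [hperp_id]
      _ = Uhatᵀ * Uhat - Uhatᵀ * U * (Uᵀ * Uhat) := by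
          simp only [Matrix.sub_mul, Matrix.mul_sub, Matrix.one_mul, Matrix.mul_assoc]
      _ = 1 - Uhatᵀ * U * (Uᵀ * Uhat) := by rw [hUhat]
  have hAle : specNorm (Uhatᵀ * U) ≤ 1 := hprod_le_one _ _ hnUht hnU
  have hsigma_sq : specNorm (Uhatperpᵀ * U) ^ 2
      = specNorm (1 - (Uhatᵀ * U)ᵀ * (Uhatᵀ * U)) := by
    rw [← hSS, specNorm_transpose_mul_self]; ring
  have ht_sq : specNorm (Uhatᵀ * Uperp) ^ 2
      = specNorm (1 - (Uhatᵀ * U) * (Uhatᵀ * U)ᵀ) := by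
    rw [← hRR]
    have h1 : (Uhatᵀ * Uperp) * (Uhatᵀ * Uperp)ᵀ
        = ((Uhatᵀ * Uperp)ᵀ)ᵀ * (Uhatᵀ * Uperp)ᵀ := by rw [Matrix.transpose_transpose]
    rw [h1, specNorm_transpose_mul_self, specNorm_transpose]; ring
  have hts : specNorm (Uhatᵀ * Uperp) = specNorm (Uhatperpᵀ * U) := by
    have h2 := specNorm_one_sub_symm (Uhatᵀ * U) hAle
    have h3 : specNorm (Uhatᵀ * Uperp) ^ 2 = specNorm (Uhatperpᵀ * U) ^ 2 := by
      rw [ht_sq, hsigma_sq, h2]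
    have h4 := congrArg Real.sqrt h3
    rwa [Real.sqrt_sq (specNorm_nonneg _), Real.sqrt_sq (specNorm_nonneg _)] at h4
  -- D = M₁ - M₂
  have hD : Uhat * Uhatᵀ - U * Uᵀ
      = Uhat * (Uhatᵀ * Uperp) * Uperpᵀ - Uhatperp * (Uhatperpᵀ * U) * Uᵀ := by
    calc Uhat * Uhatᵀ - U * Uᵀ
        = Uhat * Uhatᵀ * (1 - U * Uᵀ) - (1 - Uhat * Uhatᵀ) * (U * Uᵀ) := by
          simp only [Matrix.mul_sub, Matrix.sub_mul, Matrix.mul_one, Matrix.one_mul]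
          abel
      _ = Uhat * Uhatᵀ * (Uperp * Uperpᵀ) - Uhatperp * Uhatperpᵀ * (U * Uᵀ) := by
          rw [hperp_id, hhatperp_id]
      _ = Uhat * (Uhatᵀ * Uperp) * Uperpᵀ - Uhatperp * (Uhatperpᵀ * U) * Uᵀ := by
          simp only [Matrix.mul_assoc]
  have horth0 : (Uhatperp * (Uhatperpᵀ * U) * Uᵀ)ᵀ * (Uhat * (Uhatᵀ * Uperp) * Uperpᵀ) = 0 := by
    have h1 : (Uhatperp * (Uhatperpᵀ * U) * Uᵀ)ᵀ = U * ((Uᵀ * Uhatperp) * Uhatperpᵀ) := by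
      simp only [Matrix.transpose_mul, Matrix.transpose_transpose, Matrix.mul_assoc]
    rw [h1]
    calc U * ((Uᵀ * Uhatperp) * Uhatperpᵀ) * (Uhat * (Uhatᵀ * Uperp) * Uperpᵀ)
        = U * (Uᵀ * Uhatperp) * ((Uhatperpᵀ * Uhat) * ((Uhatᵀ * Uperp) * Uperpᵀ)) := by
          simp only [Matrix.mul_assoc]
      _ = 0 := by rw [hUhatpUhat, Matrix.zero_mul, Matrix.mul_zero]
  -- upper bound
  have hub : specNorm (Uhat * Uhatᵀ - U * Uᵀ) ≤ specNorm (Uhatperpᵀ * U) := by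
    rw [specNorm_eq]
    refine (specCLM _).opNorm_le_bound (specNorm_nonneg _) fun x => ?_
    set M₁ := Uhat * (Uhatᵀ * Uperp) * Uperpᵀ with hM₁
    set M₂ := Uhatperp * (Uhatperpᵀ * U) * Uᵀ with hM₂
    have hDx : specCLM (Uhat * Uhatᵀ - U * Uᵀ) x = specCLM M₁ x - specCLM M₂ x := by
      rw [hD, specCLM_sub]; rfl
    have hi0 : ⟪specCLM M₁ x, specCLM M₂ x⟫ = 0 := by
      rw [real_inner_comm, inner_specCLM_left]
      have h1 : specCLM M₂ᵀ (specCLM M₁ x) = specCLM (M₂ᵀ * M₁) x := by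
        rw [specCLM_mul M₂ᵀ M₁]; rfl
      rw [h1, horth0, specCLM_zero]
      simp
    have hpy : ‖specCLM (Uhat * Uhatᵀ - U * Uᵀ) x‖ ^ 2
        = ‖specCLM M₁ x‖ ^ 2 + ‖specCLM M₂ x‖ ^ 2 := by
      rw [hDx, norm_sub_sq_real, hi0]; ring
    have hm1 : ‖specCLM M₁ x‖ ≤ specNorm (Uhatᵀ * Uperp) * ‖specCLM Uperpᵀ x‖ := by
      have e1 : specCLM M₁ x = specCLM Uhat (specCLM (Uhatᵀ * Uperp) (specCLM Uperpᵀ x)) := by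
        rw [hM₁, specCLM_mul (Uhat * (Uhatᵀ * Uperp)) Uperpᵀ,
          specCLM_mul Uhat (Uhatᵀ * Uperp)]; rfl
      rw [e1, norm_specCLM_isometry hUhat]
      exact norm_specCLM_le _ _
    have hm2 : ‖specCLM M₂ x‖ ≤ specNorm (Uhatperpᵀ * U) * ‖specCLM Uᵀ x‖ := by
      have e1 : specCLM M₂ x = specCLM Uhatperp (specCLM (Uhatperpᵀ * U) (specCLM Uᵀ x)) := by
        rw [hM₂, specCLM_mul (Uhatperp * (Uhatperpᵀ * U)) Uᵀ,
          specCLM_mul Uhatperp (Uhatperpᵀ * U)]; rfl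
      rw [e1, norm_specCLM_isometry hUhatperp]
      exact norm_specCLM_le _ _
    rw [hts] at hm1
    have hsum := pythagoras hUcomp x
    have hsq : ‖specCLM (Uhat * Uhatᵀ - U * Uᵀ) x‖ ^ 2
        ≤ (specNorm (Uhatperpᵀ * U) * ‖x‖) ^ 2 := by
      rw [hpy]
      have b1 : ‖specCLM M₁ x‖ ^ 2 ≤ (specNorm (Uhatperpᵀ * U) * ‖specCLM Uperpᵀ x‖) ^ 2 := by
        nlinarith [norm_nonneg (specCLM M₁ x)]
      have b2 : ‖specCLM M₂ x‖ ^ 2 ≤ (specNorm (Uhatperpᵀ * U) * ‖specCLM Uᵀ x‖) ^ 2 := by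
        nlinarith [norm_nonneg (specCLM M₂ x)]
      nlinarith [specNorm_nonneg (Uhatperpᵀ * U)]
    have h5 := Real.sqrt_le_sqrt hsq
    rwa [Real.sqrt_sq (norm_nonneg _), Real.sqrt_sq (mul_nonneg (specNorm_nonneg _) (norm_nonneg _))] at h5
  -- lower bound
  have hPP : (U * Uᵀ) * (U * Uᵀ) = U * Uᵀ := by
    calc (U * Uᵀ) * (U * Uᵀ) = U * ((Uᵀ * U) * Uᵀ) := by simp only [Matrix.mul_assoc]
      _ = U * Uᵀ := by rw [hU, Matrix.one_mul]
  have hM2D : Uhatperp * (Uhatperpᵀ * U) * Uᵀ = (U * Uᵀ - Uhat * Uhatᵀ) * (U * Uᵀ) := by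
    calc Uhatperp * (Uhatperpᵀ * U) * Uᵀ = (Uhatperp * Uhatperpᵀ) * (U * Uᵀ) := by
          simp only [Matrix.mul_assoc]
      _ = (1 - Uhat * Uhatᵀ) * (U * Uᵀ) := by rw [hhatperp_id]
      _ = (U * Uᵀ) * (U * Uᵀ) - Uhat * Uhatᵀ * (U * Uᵀ) := by
          rw [Matrix.sub_mul, Matrix.one_mul, hPP]
      _ = (U * Uᵀ - Uhat * Uhatᵀ) * (U * Uᵀ) := by rw [Matrix.sub_mul]
  have hlb : specNorm (Uhatperpᵀ * U) ≤ specNorm (Uhat * Uhatᵀ - U * Uᵀ) := by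
    have h1 : specNorm (Uhatperp * ((Uhatperpᵀ * U) * Uᵀ)) = specNorm (Uhatperpᵀ * U) := by
      rw [specNorm_isometry_mul hUhatperp, specNorm_mul_isometry hU]
    have h2 : Uhatperp * ((Uhatperpᵀ * U) * Uᵀ) = (U * Uᵀ - Uhat * Uhatᵀ) * (U * Uᵀ) := by
      rw [← Matrix.mul_assoc, hM2D]
    have h3 : specNorm ((U * Uᵀ - Uhat * Uhatᵀ) * (U * Uᵀ))
        ≤ specNorm (U * Uᵀ - Uhat * Uhatᵀ) * specNorm (U * Uᵀ) := specNorm_mul_le _ _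
    have h4 : specNorm (U * Uᵀ - Uhat * Uhatᵀ) = specNorm (Uhat * Uhatᵀ - U * Uᵀ) := by
      have h5 : U * Uᵀ - Uhat * Uhatᵀ = -(Uhat * Uhatᵀ - U * Uᵀ) := by abel
      rw [h5, specNorm_neg]
    have h6 : specNorm (U * Uᵀ) ≤ 1 := hprod_le_one _ _ hnU hnUt
    rw [← h1, h2]
    calc specNorm ((U * Uᵀ - Uhat * Uhatᵀ) * (U * Uᵀ))
        ≤ specNorm (U * Uᵀ - Uhat * Uhatᵀ) * specNorm (U * Uᵀ) := h3
      _ ≤ specNorm (Uhat * Uhatᵀ - U * Uᵀ) := by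
          rw [h4]
          nlinarith [specNorm_nonneg (Uhat * Uhatᵀ - U * Uᵀ), specNorm_nonneg (U * Uᵀ)]
  have heqn : specNorm (Uhat * Uhatᵀ - U * Uᵀ) = specNorm (Uhatperpᵀ * U) :=
    le_antisymm hub hlb
  refine ⟨?_, heqn⟩
  ----------------------------------------------------------------
  -- PART 1 : the bound
  ----------------------------------------------------------------
  set ε := specNorm (Qhat - Q) with hε
  have hε0 : 0 ≤ ε := specNorm_nonneg _
  have hab : (0:ℝ) < a - b := by linarith
  -- Q-form bound on ker Uᵀ
  have hQbound : ∀ x : EuclideanSpace ℝ (Fin n), specCLM Uᵀ x = 0 →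
      ⟪x, specCLM Q x⟫ ≤ b * ‖x‖ ^ 2 := by
    intro x hx
    have hsplit : ⟪x, specCLM Q x⟫
        = ⟪x, specCLM (U * Matrix.diagonal Λ₁ * Uᵀ) x⟫
          + ⟪x, specCLM (Uperp * Matrix.diagonal Λ₂ * Uperpᵀ) x⟫ := by
      rw [hQdecomp, specCLM_add, ContinuousLinearMap.add_apply, inner_add_right]
    have hterm1 : ⟪x, specCLM (U * Matrix.diagonal Λ₁ * Uᵀ) x⟫ = 0 := by
      have e1 : specCLM (U * Matrix.diagonal Λ₁ * Uᵀ) x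
          = specCLM U (specCLM (Matrix.diagonal Λ₁) (specCLM Uᵀ x)) := by
        rw [specCLM_mul (U * Matrix.diagonal Λ₁) Uᵀ, specCLM_mul U (Matrix.diagonal Λ₁)]; rfl
      rw [e1, hx]
      simp
    have hterm2 : ⟪x, specCLM (Uperp * Matrix.diagonal Λ₂ * Uperpᵀ) x⟫ ≤ b * ‖x‖ ^ 2 := by
      have e1 : specCLM (Uperp * Matrix.diagonal Λ₂ * Uperpᵀ) x
          = specCLM Uperp (specCLM (Matrix.diagonal Λ₂) (specCLM Uperpᵀ x)) := by
        rw [specCLM_mul (Uperp * Matrix.diagonal Λ₂) Uperpᵀ,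
          specCLM_mul Uperp (Matrix.diagonal Λ₂)]; rfl
      have e2 : ⟪x, specCLM (Uperp * Matrix.diagonal Λ₂ * Uperpᵀ) x⟫
          = ⟪specCLM Uperpᵀ x, specCLM (Matrix.diagonal Λ₂) (specCLM Uperpᵀ x)⟫ := by
        rw [e1, real_inner_comm, inner_specCLM_left, real_inner_comm]
      have e3 : ‖specCLM Uperpᵀ x‖ ^ 2 = ‖x‖ ^ 2 := by
        have := pythagoras hUcomp x
        rw [hx, norm_zero] at this
        simpa using this
      rw [e2]
      calc ⟪specCLM Uperpᵀ x, specCLM (Matrix.diagonal Λ₂) (specCLM Uperpᵀ x)⟫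
          ≤ b * ‖specCLM Uperpᵀ x‖ ^ 2 := inner_diag_le hb _
        _ = b * ‖x‖ ^ 2 := by rw [e3]
    rw [hsplit, hterm1, zero_add]
    exact hterm2
  have hweyl : ∀ i, Λhat₂ i ≤ b + ε :=
    weyl_bound Q Qhat U Uhat Uhatperp hUhat hUhatperp hUhUp Λhat₁ Λhat₂
      hQhatUhat hQhatUhatp hleading b hQbound
  -- Sylvester relation
  have hE : Uhatperpᵀ * (Qhat - Q) * U
      = Matrix.diagonal Λhat₂ * (Uhatperpᵀ * U) - (Uhatperpᵀ * U) * Matrix.diagonal Λ₁ := by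
    calc Uhatperpᵀ * (Qhat - Q) * U
        = Uhatperpᵀ * Qhat * U - Uhatperpᵀ * (Q * U) := by
          simp only [Matrix.mul_sub, Matrix.sub_mul, Matrix.mul_assoc]
      _ = Matrix.diagonal Λhat₂ * Uhatperpᵀ * U - Uhatperpᵀ * (U * Matrix.diagonal Λ₁) := by
          rw [hUhpQhat, hQU]
      _ = Matrix.diagonal Λhat₂ * (Uhatperpᵀ * U) - (Uhatperpᵀ * U) * Matrix.diagonal Λ₁ := by
          simp only [Matrix.mul_assoc]
  have hεE : specNorm (Uhatperpᵀ * (Qhat - Q) * U) ≤ ε := by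
    calc specNorm (Uhatperpᵀ * (Qhat - Q) * U)
        ≤ specNorm (Uhatperpᵀ * (Qhat - Q)) * specNorm U := specNorm_mul_le _ _
      _ ≤ specNorm (Uhatperpᵀ * (Qhat - Q)) := by
          nlinarith [specNorm_nonneg (Uhatperpᵀ * (Qhat - Q)), specNorm_nonneg U]
      _ ≤ specNorm Uhatperpᵀ * specNorm (Qhat - Q) := specNorm_mul_le _ _
      _ ≤ ε := by nlinarith [specNorm_nonneg (Qhat - Q), specNorm_nonneg Uhatperpᵀ]
  have hσ1 : specNorm (Uhatperpᵀ * U) ≤ 1 := hprod_le_one _ _ hnUhpt hnU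
  rw [heqn]
  -- main estimate : specNorm S * (a - b) ≤ 2 ε
  have hmain : specNorm (Uhatperpᵀ * U) * (a - b) ≤ 2 * ε := by
    rcases (specNorm_nonneg (Uhatperpᵀ * U)).eq_or_lt with h0 | hpos
    · rw [← h0]; nlinarith
    · obtain ⟨u, v, hu, hv, hSu, hStv⟩ := exists_sing_pair (Uhatperpᵀ * U) hpos
      set σ := specNorm (Uhatperpᵀ * U) with hσdef
      have hEu : specCLM (Uhatperpᵀ * (Qhat - Q) * U) u
          = specCLM (Matrix.diagonal Λhat₂) (specCLM (Uhatperpᵀ * U) u)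
            - specCLM (Uhatperpᵀ * U) (specCLM (Matrix.diagonal Λ₁) u) := by
        rw [hE, specCLM_sub, ContinuousLinearMap.sub_apply,
          specCLM_mul (Matrix.diagonal Λhat₂) (Uhatperpᵀ * U),
          specCLM_mul (Uhatperpᵀ * U) (Matrix.diagonal Λ₁)]
        rfl
      have hI1 : ⟪v, specCLM (Matrix.diagonal Λhat₂) (specCLM (Uhatperpᵀ * U) u)⟫
          ≤ σ * (b + ε) := by
        rw [hSu, _root_.map_smul, real_inner_smul_right]
        have h1 : ⟪v, specCLM (Matrix.diagonal Λhat₂) v⟫ ≤ (b + ε) * ‖v‖ ^ 2 :=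
          inner_diag_le hweyl v
        rw [hv] at h1
        have h2 : ⟪v, specCLM (Matrix.diagonal Λhat₂) v⟫ ≤ b + ε := by
          simpa using h1
        nlinarith
      have hI2 : σ * a ≤ ⟪v, specCLM (Uhatperpᵀ * U) (specCLM (Matrix.diagonal Λ₁) u)⟫ := by
        have h1 : ⟪v, specCLM (Uhatperpᵀ * U) (specCLM (Matrix.diagonal Λ₁) u)⟫
            = ⟪specCLM (Matrix.diagonal Λ₁) u, specCLM (Uhatperpᵀ * U)ᵀ v⟫ := by
          rw [real_inner_comm, inner_specCLM_left]
        rw [h1, hStv, real_inner_smul_right]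
        have h2 : a * ‖u‖ ^ 2 ≤ ⟪u, specCLM (Matrix.diagonal Λ₁) u⟫ := le_inner_diag ha u
        rw [hu] at h2
        have h3 : a ≤ ⟪u, specCLM (Matrix.diagonal Λ₁) u⟫ := by simpa using h2
        have h4 : ⟪specCLM (Matrix.diagonal Λ₁) u, u⟫
            = ⟪u, specCLM (Matrix.diagonal Λ₁) u⟫ := real_inner_comm _ _
        rw [h4]
        nlinarith
      have hIlow : -ε ≤ ⟪v, specCLM (Uhatperpᵀ * (Qhat - Q) * U) u⟫ := by
        have h1 := abs_real_inner_le_norm v (specCLM (Uhatperpᵀ * (Qhat - Q) * U) u)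
        have h2 : ‖specCLM (Uhatperpᵀ * (Qhat - Q) * U) u‖
            ≤ specNorm (Uhatperpᵀ * (Qhat - Q) * U) * ‖u‖ := norm_specCLM_le _ _
        rw [hv, one_mul] at h1
        rw [hu, mul_one] at h2
        have h3 : ‖specCLM (Uhatperpᵀ * (Qhat - Q) * U) u‖ ≤ ε := le_trans h2 hεE
        have := neg_abs_le ⟪v, specCLM (Uhatperpᵀ * (Qhat - Q) * U) u⟫
        linarith
      have hIhigh : ⟪v, specCLM (Uhatperpᵀ * (Qhat - Q) * U) u⟫ ≤ σ * (b + ε) - σ * a := by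
        rw [hEu, inner_sub_right]
        linarith
      nlinarith
  rw [div_mul_eq_mul_div, le_div_iff₀ hab]
  nlinarith
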